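/- Let Ω ⊂ ℝⁿ be a bounded open convex set and let g : O → ℝ (with O ⊂ ℝ^{n−1} open containing y′) be such that the graph of g near y := (y′, g(y′)) lies in ∂Ω, g is differentiable at y′, and Ω lies above the graph. Let ã ∈ Ω and let ũ := u_{Ω,ã} be the cone function with vertex ã. If the affine function ℓ(x) := [(∇g(y′), −1)·(x − y)] / [1 + y′·∇g(y′) − g(y′) ] satisfies ℓ(ã) = −1 (which holds when ã = e_n lies above the graph appropriately), then ∇ℓ ∈ ∂ũ(ã); consequently the segment {s(∇g(y′), −1)/(1 + y′·∇g(y′) − g(y′)) : 0 ≤ s ≤ 1} is contained in ∂ũ(ã). -/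

import Mathlib

open scoped RealInnerProductSpace

/-- Append a last coordinate to a point of `ℝ^m`, giving a point of `ℝ^{m+1}`. -/
def snocE {m : ℕ} (x : EuclideanSpace ℝ (Fin m)) (c : ℝ) :
    EuclideanSpace ℝ (Fin (m + 1)) :=
  WithLp.toLp 2 (Fin.snoc (α := fun _ => ℝ) x.ofLp c)

/-- The first `m` coordinates of a point of `ℝ^{m+1}`. -/
def initE {m : ℕ} (x : EuclideanSpace ℝ (Fin (m + 1))) :
    EuclideanSpace ℝ (Fin m) :=
  WithLp.toLp 2 (fun i : Fin m => x.ofLp i.castSucc)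

/-- The subgradient of `u : Ω → ℝ` at `x`. -/
def subgrad {n : ℕ} (Ω : Set (EuclideanSpace ℝ (Fin n)))
    (u : EuclideanSpace ℝ (Fin n) → ℝ) (x : EuclideanSpace ℝ (Fin n)) :
    Set (EuclideanSpace ℝ (Fin n)) :=
  {p | ∀ z ∈ Ω, u x + ⟪p, z - x⟫ ≤ u z}

set_option maxHeartbeats 1000000

open Filter Asymptotics Topology

lemma inner_snocE_left {m : ℕ} (a : EuclideanSpace ℝ (Fin m)) (c : ℝ)
    (x : EuclideanSpace ℝ (Fin (m + 1))) :
    ⟪snocE a c, x⟫ = ⟪a, initE x⟫ + c * x (Fin.last m) := by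
  simp [snocE, initE, PiLp.inner_apply, RCLike.inner_apply, Fin.sum_univ_castSucc,
    Fin.snoc_castSucc, Fin.snoc_last]
  exact mul_comm _ _

lemma suppE {m : ℕ} (Ω : Set (EuclideanSpace ℝ (Fin (m + 1))))
    (hΩo : IsOpen Ω) (hΩc : Convex ℝ Ω)
    (O : Set (EuclideanSpace ℝ (Fin m))) (hO : IsOpen O)
    (g : EuclideanSpace ℝ (Fin m) → ℝ)
    (y' : EuclideanSpace ℝ (Fin m)) (hy' : y' ∈ O)
    (hycl : snocE y' (g y') ∈ closure Ω)
    (hdiff : DifferentiableAt ℝ g y')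
    (habove : ∀ x ∈ Ω, initE x ∈ O → g (initE x) < x (Fin.last m)) :
    ∀ x ∈ closure Ω,
      ⟪snocE (gradient g y') (-1), x - snocE y' (g y')⟫ ≤ 0 := by
  set v := gradient g y' with hvdef
  set w : EuclideanSpace ℝ (Fin (m + 1)) := snocE v (-1) with hwdef
  set y : EuclideanSpace ℝ (Fin (m + 1)) := snocE y' (g y') with hydef
  suffices h : ∀ x ∈ Ω, ⟪w, x - y⟫ ≤ 0 by
    have hcl : IsClosed {x : EuclideanSpace ℝ (Fin (m + 1)) | ⟪w, x - y⟫ ≤ 0} := by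
      apply isClosed_le _ continuous_const
      exact Continuous.inner continuous_const (continuous_id.sub continuous_const)
    exact fun x hx => closure_minimal (fun x' hx' => h x' hx') hcl hx
  intro x0 hx0
  by_contra hcon
  push_neg at hcon
  set c := ⟪w, x0 - y⟫ with hcdef
  set x0' := initE x0 with hx0'def
  set L := nhdsWithin (0:ℝ) (Set.Ioi 0) with hLdef
  set p : ℝ → EuclideanSpace ℝ (Fin m) := fun t => y' + t • (x0' - y') with hpdef
  have hpcont : Continuous p := by continuity
  have h1 : Tendsto p L (𝓝 y') := by
    have h0 := (hpcont.tendsto 0).mono_left (nhdsWithin_le_nhds (s := Set.Ioi (0:ℝ)))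
    have : p 0 = y' := by simp [hpdef]
    rwa [this] at h0
  have hmemO : ∀ᶠ t in L, p t ∈ O := h1.eventually (hO.eventually_mem hy')
  have hmemIoc : ∀ᶠ t in L, t ∈ Set.Ioc (0:ℝ) 1 :=
    Ioc_mem_nhdsGT_of_mem ⟨le_refl 0, zero_lt_one⟩
  -- little-o estimate
  have hgrad : HasGradientAt g v y' := hdiff.hasGradientAt
  have hlo : (fun x' => g x' - g y' - ⟪v, x' - y'⟫) =o[𝓝 y'] fun x' => x' - y' :=
    hasGradientAt_iff_isLittleO.1 hgrad
  have hlo1 : (fun t => g (p t) - g y' - ⟪v, p t - y'⟫) =o[L] fun t => p t - y' :=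
    hlo.comp_tendsto h1
  have hbig : (fun t => p t - y') =O[L] fun t : ℝ => t := by
    apply IsBigO.of_bound ‖x0' - y'‖
    filter_upwards with t
    have : p t - y' = t • (x0' - y') := by simp [hpdef]
    rw [this, norm_smul, mul_comm]
  have hlo2 : (fun t => g (p t) - g y' - ⟪v, p t - y'⟫) =o[L] fun t : ℝ => t :=
    hlo1.trans_isBigO hbig
  have hev : ∀ᶠ t in L, ‖g (p t) - g y' - ⟪v, p t - y'⟫‖ ≤ c / 2 * ‖t‖ :=
    hlo2.def (half_pos hcon)
  -- combine
  have hfin : ∀ᶠ t in L, False := by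
    filter_upwards [hmemO, hmemIoc, hev] with t htO htIoc htev
    obtain ⟨ht0, ht1⟩ := htIoc
    set xt : EuclideanSpace ℝ (Fin (m + 1)) := (1 - t) • y + t • x0 with hxtdef
    have hxtΩ : xt ∈ Ω := by
      have := hΩc.combo_closure_interior_mem_interior hycl
        (by rwa [hΩo.interior_eq]) (by linarith : (0:ℝ) ≤ 1 - t) ht0 (by ring)
      rwa [hΩo.interior_eq] at this
    have hinit : initE xt = p t := by
      ext i
      simp only [hxtdef, hpdef, initE, hydef, snocE]
      simp only [PiLp.add_apply, PiLp.smul_apply, smul_eq_mul, PiLp.toLp_apply]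
      rw [Fin.snoc_castSucc]
      show (1 - t) * y' i + t * x0 i.castSucc = y' i + t * (x0' i - y' i)
      simp only [hx0'def, initE]
      ring
    have hlast : xt (Fin.last m) = (1 - t) * g y' + t * x0 (Fin.last m) := by
      simp only [hxtdef, hydef, snocE, PiLp.add_apply, PiLp.smul_apply, smul_eq_mul]
      rw [Fin.snoc_last]
    have habv : g (p t) < xt (Fin.last m) := by
      have := habove xt hxtΩ (by rwa [hinit])
      rwa [hinit] at this
    -- inner product computations
    have hsub : xt - y = t • (x0 - y) := by
      rw [hxtdef]; module
    have hinner1 : ⟪w, xt - y⟫ = t * c := by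
      rw [hsub, real_inner_smul_right, hcdef]
    have hinitsub : initE (xt - y) = p t - y' := by
      ext i
      simp only [initE, PiLp.sub_apply, PiLp.toLp_apply]
      have h1 : xt i.castSucc = initE xt i := rfl
      have h2 : y i.castSucc = y' i := by
        simp only [hydef, snocE]; rw [Fin.snoc_castSucc]
      rw [h1, hinit, h2]
    have hlastsub : (xt - y) (Fin.last m) = xt (Fin.last m) - g y' := by
      simp only [PiLp.sub_apply]
      congr 1
      simp only [hydef, snocE]; rw [Fin.snoc_last]
    have hinner2 : ⟪w, xt - y⟫ = ⟪v, p t - y'⟫ - (xt (Fin.last m) - g y') := by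
      rw [hwdef, inner_snocE_left, hinitsub, hlastsub]; ring
    -- the contradiction
    have hnorm : ‖t‖ = t := Real.norm_eq_abs t ▸ abs_of_pos ht0
    rw [hnorm] at htev
    have hle : -(g (p t) - g y' - ⟪v, p t - y'⟫) ≤ c / 2 * t := by
      have h6 := neg_le_of_abs_le (Real.norm_eq_abs _ ▸ htev)
      linarith [h6]
    have h3 : t * c = ⟪v, p t - y'⟫ - (xt (Fin.last m) - g y') := by
      rw [← hinner1, hinner2]
    have h4 : t * c < c / 2 * t := by linarith [habv, hle]
    have h5 : c / 2 * t = t * c / 2 := by ring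
    have h7 : 0 < t * c := mul_pos ht0 hcon
    linarith
  obtain ⟨t, ht⟩ := hfin.exists
  exact ht

lemma exitE {n : ℕ} (Ω : Set (EuclideanSpace ℝ (Fin n))) (hΩo : IsOpen Ω)
    (hΩb : Bornology.IsBounded Ω) (a z : EuclideanSpace ℝ (Fin n))
    (hz : z ∈ Ω) (b0 : EuclideanSpace ℝ (Fin n)) (hb0 : b0 ∈ frontier Ω) :
    ∃ b ∈ frontier Ω, ∃ θ ∈ Set.Icc (0:ℝ) 1, z = (1 - θ) • b + θ • a := by
  by_cases hza : z = a
  · exact ⟨b0, hb0, 1, ⟨zero_le_one, le_refl 1⟩, by simp [hza]⟩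
  · set v := z - a with hv
    have hv0 : v ≠ 0 := sub_ne_zero.2 hza
    have hvn : 0 < ‖v‖ := norm_pos_iff.2 hv0
    set S : Set ℝ := {t : ℝ | a + t • v ∈ Ω} with hS
    have h1S : (1:ℝ) ∈ S := by simp [hS, hv, hz]
    obtain ⟨R, hR⟩ := (Metric.isBounded_iff_subset_closedBall 0).1 hΩb
    have hbdd : BddAbove S := by
      refine ⟨(R + ‖a‖) / ‖v‖, fun t ht => ?_⟩
      have h1 : ‖a + t • v‖ ≤ R := by
        simpa [Metric.mem_closedBall] using hR ht
      have h2 : |t| * ‖v‖ = ‖t • v‖ := (norm_smul t v).symm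
      have h3 : ‖t • v‖ ≤ ‖a + t • v‖ + ‖a‖ := by
        simpa using norm_sub_le (a + t • v) a
      have h4 : t ≤ |t| := le_abs_self t
      rw [le_div_iff₀ hvn]
      nlinarith
    set T := sSup S with hT
    have hT1 : (1:ℝ) ≤ T := le_csSup hbdd h1S
    have hT0 : (0:ℝ) < T := lt_of_lt_of_le one_pos hT1
    have hTne : T ≠ 0 := ne_of_gt hT0
    set b := a + T • v with hb
    have hcont : Continuous (fun t : ℝ => a + t • v) := by continuity
    have hbcl : b ∈ closure Ω := by
      have hTcl : T ∈ closure S := csSup_mem_closure ⟨1, h1S⟩ hbdd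
      have h5 : b ∈ closure ((fun t : ℝ => a + t • v) '' S) :=
        image_closure_subset_closure_image hcont (s := S) ⟨T, hTcl, rfl⟩
      refine closure_mono ?_ h5
      rintro x ⟨t, ht, rfl⟩; exact ht
    have hbno : b ∉ Ω := by
      intro hbΩ
      obtain ⟨ε, hε, hball⟩ := Metric.isOpen_iff.1 hΩo b hbΩ
      have htS : T + ε / (2 * ‖v‖) ∈ S := by
        apply hball
        simp only [Metric.mem_ball, hS, Set.mem_setOf_eq, hb]
        rw [dist_eq_norm]
        have he : a + (T + ε / (2 * ‖v‖)) • v - (a + T • v) = (ε / (2 * ‖v‖)) • v := by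
          rw [add_smul]; abel
        rw [he, norm_smul, Real.norm_eq_abs, abs_of_pos (by positivity),
          div_mul_eq_mul_div, mul_comm, div_lt_iff₀ (by positivity)]
        nlinarith
      have := le_csSup hbdd htS
      have hpos : 0 < ε / (2 * ‖v‖) := by positivity
      linarith
    have hbfr : b ∈ frontier Ω := ⟨hbcl, by rwa [hΩo.interior_eq]⟩
    have hinvle : 1 / T ≤ 1 := (div_le_one hT0).2 hT1
    have hinvpos : 0 < 1 / T := by positivity
    refine ⟨b, hbfr, 1 - 1 / T, ⟨by linarith, by linarith⟩, ?_⟩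
    have h1T : (1:ℝ) - (1 - 1 / T) = T⁻¹ := by rw [one_div]; ring
    have hz2 : z = a + v := by simp [hv]
    rw [h1T, hb, hz2, smul_add, smul_smul, inv_mul_cancel₀ hTne, one_smul, one_div]
    module

/-- Let `Ω ⊆ ℝⁿ` (`n = m+1`) be bounded open and convex,
`g : O → ℝ` with `O ⊆ ℝ^{n-1}` open, the graph of `g` over `O` contained in
`∂Ω`, `g` differentiable at `y' ∈ O`, and `Ω` above the graph.  Let `ã ∈ Ω` and
let `ũ` be the cone function with vertex `ã`.  If the affine function
`ℓ(x) = (∇g(y'),-1)·(x - (y', g y')) / (1 + y'·∇g(y') - g y')` satisfies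
`ℓ(ã) = -1`, then `∇ℓ ∈ ∂ũ(ã)`, and consequently the segment
`{s(∇g(y'),-1)/(1 + y'·∇g(y') - g y') : 0 ≤ s ≤ 1}` is contained in `∂ũ(ã)`. -/
theorem stmt19 {m : ℕ} (Ω : Set (EuclideanSpace ℝ (Fin (m + 1))))
    (hΩo : IsOpen Ω) (hΩc : Convex ℝ Ω) (hΩb : Bornology.IsBounded Ω)
    (O : Set (EuclideanSpace ℝ (Fin m))) (hO : IsOpen O)
    (g : EuclideanSpace ℝ (Fin m) → ℝ)
    (y' : EuclideanSpace ℝ (Fin m)) (hy' : y' ∈ O)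
    (hgraph : ∀ x' ∈ O, snocE x' (g x') ∈ frontier Ω)
    (hdiff : DifferentiableAt ℝ g y')
    (habove : ∀ x ∈ Ω, initE x ∈ O → g (initE x) < x (Fin.last m))
    (atil : EuclideanSpace ℝ (Fin (m + 1))) (hatil : atil ∈ Ω)
    (u : EuclideanSpace ℝ (Fin (m + 1)) → ℝ)
    (hcone : ∀ z ∈ frontier Ω, ∀ θ ∈ Set.Icc (0:ℝ) 1,
      u ((1 - θ) • z + θ • atil) = -θ)
    (w : EuclideanSpace ℝ (Fin (m + 1)))
    (hw : w = snocE (gradient g y') (-1))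
    (denom : ℝ) (hdenom : denom = 1 + ⟪y', gradient g y'⟫ - g y')
    (hl : ⟪w, atil - snocE y' (g y')⟫ / denom = -1) :
    denom⁻¹ • w ∈ subgrad Ω u atil ∧
      ∀ s : ℝ, 0 ≤ s → s ≤ 1 → s • (denom⁻¹ • w) ∈ subgrad Ω u atil := by
  set y : EuclideanSpace ℝ (Fin (m + 1)) := snocE y' (g y') with hydef
  have hyfr : y ∈ frontier Ω := hgraph y' hy'
  have hycl : y ∈ closure Ω := hyfr.1
  have hsupp : ∀ x ∈ closure Ω, ⟪w, x - y⟫ ≤ 0 := by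
    intro x hx
    rw [hw]
    exact suppE Ω hΩo hΩc O hO g y' hy' hycl hdiff habove x hx
  have hd0 : denom ≠ 0 := by
    intro h
    rw [h, div_zero] at hl
    norm_num at hl
  have hinner : ⟪w, atil - y⟫ = -denom := by
    have h := (div_eq_iff hd0).1 hl
    rw [neg_one_mul] at h
    exact h
  have hdpos : 0 < denom := by
    have := hsupp atil (subset_closure hatil)
    rw [hinner] at this
    rcases lt_or_eq_of_le (neg_nonpos.1 this) with h | h
    · exact h
    · exact absurd h.symm hd0
  have huat : u atil = -1 := by
    have := hcone y hyfr 1 ⟨zero_le_one, le_refl 1⟩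
    simpa using this
  set p : EuclideanSpace ℝ (Fin (m + 1)) := denom⁻¹ • w with hpdef
  have hkey : ∀ z ∈ Ω, ⟪p, z - atil⟫ ≤ u z + 1 ∧ 0 ≤ u z + 1 := by
    intro z hz
    obtain ⟨b, hbfr, θ, ⟨hθ0, hθ1⟩, hzeq⟩ := exitE Ω hΩo hΩb atil z hz y hyfr
    have huz : u z = -θ := by rw [hzeq]; exact hcone b hbfr θ ⟨hθ0, hθ1⟩
    have hsub : z - atil = (1 - θ) • (b - atil) := by rw [hzeq]; module
    have hwb : ⟪w, b - atil⟫ ≤ denom := by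
      have h1 : ⟪w, b - atil⟫ = ⟪w, b - y⟫ - ⟪w, atil - y⟫ := by
        rw [← inner_sub_right]
        congr 1
        abel
      rw [h1, hinner]
      have := hsupp b hbfr.1
      linarith
    have hpb : ⟪p, b - atil⟫ ≤ 1 := by
      rw [hpdef, real_inner_smul_left]
      rw [inv_mul_le_iff₀ hdpos, mul_one]
      exact hwb
    have hinnerz : ⟪p, z - atil⟫ = (1 - θ) * ⟪p, b - atil⟫ := by
      rw [hsub, real_inner_smul_right]
    constructor
    · rw [hinnerz, huz]
      nlinarith
    · rw [huz]; linarith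
  constructor
  · intro z hz
    obtain ⟨h1, h2⟩ := hkey z hz
    rw [huat]
    linarith
  · intro s hs0 hs1 z hz
    obtain ⟨h1, h2⟩ := hkey z hz
    rw [huat, real_inner_smul_left]
    nlinarith [mul_nonneg hs0 (sub_nonneg.2 h1), mul_nonneg (sub_nonneg.2 hs1) h2]
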